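/- For a 2-component link given by Lipschitz curves γ₁, γ₂: S¹ → ℝ³ with disjoint images, the Möbius cross energy satisfies E(γ₁,γ₂) ≥ 4π·|lk(γ₁,γ₂)|, where lk denotes the linking number. -/

import Mathlib

open Real MeasureTheory
open scoped RealInnerProductSpace

set_option maxHeartbeats 1000000

private lemma norm_sq_eq3 (x : EuclideanSpace ℝ (Fin 3)) :
    ‖x‖ ^ 2 = x 0 ^ 2 + x 1 ^ 2 + x 2 ^ 2 := by
  rw [EuclideanSpace.norm_eq, Real.sq_sqrt (by positivity)]
  simp [Fin.sum_univ_three, sq_abs]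

private lemma abs_det_le_norms (a b c : EuclideanSpace ℝ (Fin 3)) :
    |Matrix.det (Matrix.of fun i j => (![a, b, c] i) j)| ≤ ‖a‖ * ‖b‖ * ‖c‖ := by
  have hd : Matrix.det (Matrix.of fun i j => (![a, b, c] i) j)
      = a 0 * (b 1 * c 2 - b 2 * c 1) - a 1 * (b 0 * c 2 - b 2 * c 0)
        + a 2 * (b 0 * c 1 - b 1 * c 0) := by
    simp [Matrix.det_fin_three]; ring
  set d := Matrix.det (Matrix.of fun i j => (![a, b, c] i) j) with hdd
  have hsq : d ^ 2 ≤ (‖a‖ * ‖b‖ * ‖c‖) ^ 2 := by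
    have ha := norm_sq_eq3 a
    have hb := norm_sq_eq3 b
    have hc := norm_sq_eq3 c
    have hcs : d ^ 2 ≤ ((b 1 * c 2 - b 2 * c 1) ^ 2 + (b 2 * c 0 - b 0 * c 2) ^ 2
        + (b 0 * c 1 - b 1 * c 0) ^ 2) * (a 0 ^ 2 + a 1 ^ 2 + a 2 ^ 2) := by
      rw [hd]
      nlinarith [sq_nonneg ((b 1 * c 2 - b 2 * c 1) * a 1 - (b 2 * c 0 - b 0 * c 2) * a 0),
        sq_nonneg ((b 1 * c 2 - b 2 * c 1) * a 2 - (b 0 * c 1 - b 1 * c 0) * a 0),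
        sq_nonneg ((b 2 * c 0 - b 0 * c 2) * a 2 - (b 0 * c 1 - b 1 * c 0) * a 1)]
    have hlag : (b 1 * c 2 - b 2 * c 1) ^ 2 + (b 2 * c 0 - b 0 * c 2) ^ 2
        + (b 0 * c 1 - b 1 * c 0) ^ 2
        ≤ (b 0 ^ 2 + b 1 ^ 2 + b 2 ^ 2) * (c 0 ^ 2 + c 1 ^ 2 + c 2 ^ 2) := by
      nlinarith [sq_nonneg (b 0 * c 0 + b 1 * c 1 + b 2 * c 2)]
    have h2 : d ^ 2 ≤ (b 0 ^ 2 + b 1 ^ 2 + b 2 ^ 2) * (c 0 ^ 2 + c 1 ^ 2 + c 2 ^ 2)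
        * (a 0 ^ 2 + a 1 ^ 2 + a 2 ^ 2) :=
      hcs.trans (mul_le_mul_of_nonneg_right hlag (by positivity))
    calc d ^ 2 ≤ (b 0 ^ 2 + b 1 ^ 2 + b 2 ^ 2) * (c 0 ^ 2 + c 1 ^ 2 + c 2 ^ 2)
        * (a 0 ^ 2 + a 1 ^ 2 + a 2 ^ 2) := h2
      _ = (‖a‖ * ‖b‖ * ‖c‖) ^ 2 := by rw [mul_pow, mul_pow, ha, hb, hc]; ring
  have := Real.sqrt_le_sqrt hsq
  rwa [Real.sqrt_sq_eq_abs, Real.sqrt_sq (by positivity)] at this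

private lemma pointwise_bound (a b c : EuclideanSpace ℝ (Fin 3)) (hc : c ≠ 0) :
    |Matrix.det (Matrix.of fun i j => (![a, b, c] i) j) / ‖c‖ ^ 3|
      ≤ ‖a‖ * ‖b‖ / ‖c‖ ^ 2 := by
  have hc0 : (0:ℝ) < ‖c‖ := norm_pos_iff.2 hc
  rw [abs_div, abs_of_pos (by positivity : (0:ℝ) < ‖c‖ ^ 3)]
  calc |Matrix.det (Matrix.of fun i j => (![a, b, c] i) j)| / ‖c‖ ^ 3
      ≤ (‖a‖ * ‖b‖ * ‖c‖) / ‖c‖ ^ 3 := by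
        gcongr
        exact abs_det_le_norms a b c
    _ = ‖a‖ * ‖b‖ / ‖c‖ ^ 2 := by
        field_simp

/-- The Möbius cross energy of a 2-component link in ℝ³ is at least `4π |lk|`,
where the linking number is given by the Gauss integral. -/
theorem moebius_energy_ge_four_pi_linking
    (γ₁ γ₂ : ℝ → EuclideanSpace ℝ (Fin 3)) (K₁ K₂ : NNReal)
    (h₁ : LipschitzWith K₁ γ₁) (h₂ : LipschitzWith K₂ γ₂)
    (hp₁ : Function.Periodic γ₁ (2 * π)) (hp₂ : Function.Periodic γ₂ (2 * π))
    (hdisj : ∀ s t, γ₁ s ≠ γ₂ t) :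
    4 * π * |(1 / (4 * π)) * ∫ s in (0:ℝ)..(2 * π), ∫ t in (0:ℝ)..(2 * π),
        Matrix.det (Matrix.of fun i j =>
          (![deriv γ₁ s, deriv γ₂ t, γ₁ s - γ₂ t] i) j) / ‖γ₁ s - γ₂ t‖ ^ 3|
      ≤ ∫ s in (0:ℝ)..(2 * π), ∫ t in (0:ℝ)..(2 * π),
          ‖deriv γ₁ s‖ * ‖deriv γ₂ t‖ / ‖γ₁ s - γ₂ t‖ ^ 2 := by
  have hπ : (0:ℝ) < π := Real.pi_pos
  have hT : (0:ℝ) ≤ 2 * π := by positivity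
  set f : ℝ → ℝ → ℝ := fun s t =>
    Matrix.det (Matrix.of fun i j =>
      (![deriv γ₁ s, deriv γ₂ t, γ₁ s - γ₂ t] i) j) / ‖γ₁ s - γ₂ t‖ ^ 3 with hf
  set g : ℝ → ℝ → ℝ := fun s t =>
    ‖deriv γ₁ s‖ * ‖deriv γ₂ t‖ / ‖γ₁ s - γ₂ t‖ ^ 2 with hg
  -- reduce the LHS to `|I|`
  rw [abs_mul, abs_of_pos (by positivity : (0:ℝ) < 1 / (4 * π)),
    show 4 * π * (1 / (4 * π) *
      |∫ s in (0:ℝ)..(2 * π), ∫ t in (0:ℝ)..(2 * π), f s t|)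
      = |∫ s in (0:ℝ)..(2 * π), ∫ t in (0:ℝ)..(2 * π), f s t| by
        field_simp]
  -- basic facts
  have hsub : ∀ s t, γ₁ s - γ₂ t ≠ 0 := fun s t => sub_ne_zero.2 (hdisj s t)
  have hfg : ∀ s t, |f s t| ≤ g s t := fun s t =>
    pointwise_bound (deriv γ₁ s) (deriv γ₂ t) (γ₁ s - γ₂ t) (hsub s t)
  have hgnn : ∀ s t, 0 ≤ g s t := fun s t => by positivity
  -- derivative bounds
  have hd1 : ∀ s, ‖deriv γ₁ s‖ ≤ K₁ := by
    intro s
    rw [← fderiv_apply_one_eq_deriv]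
    calc ‖fderiv ℝ γ₁ s 1‖ ≤ ‖fderiv ℝ γ₁ s‖ * ‖(1:ℝ)‖ := ContinuousLinearMap.le_opNorm _ _
      _ ≤ K₁ := by rw [norm_one, mul_one]; exact norm_fderiv_le_of_lipschitz ℝ h₁
  have hd2 : ∀ t, ‖deriv γ₂ t‖ ≤ K₂ := by
    intro t
    rw [← fderiv_apply_one_eq_deriv]
    calc ‖fderiv ℝ γ₂ t 1‖ ≤ ‖fderiv ℝ γ₂ t‖ * ‖(1:ℝ)‖ := ContinuousLinearMap.le_opNorm _ _
      _ ≤ K₂ := by rw [norm_one, mul_one]; exact norm_fderiv_le_of_lipschitz ℝ h₂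
  -- positive lower bound for the distance on the compact square
  have hc1 : Continuous γ₁ := h₁.continuous
  have hc2 : Continuous γ₂ := h₂.continuous
  have hFc : Continuous (fun q : ℝ × ℝ => ‖γ₁ q.1 - γ₂ q.2‖) :=
    ((hc1.comp continuous_fst).sub (hc2.comp continuous_snd)).norm
  obtain ⟨p, hpmem, hpmin⟩ :=
    (isCompact_Icc.prod isCompact_Icc :
      IsCompact ((Set.Icc (0:ℝ) (2 * π)) ×ˢ (Set.Icc (0:ℝ) (2 * π)))).exists_isMinOn
      ⟨(0, 0), by constructor <;> exact ⟨le_refl 0, hT⟩⟩ hFc.continuousOn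
  set δ : ℝ := ‖γ₁ p.1 - γ₂ p.2‖ with hδdef
  have hδ : 0 < δ := norm_pos_iff.2 (hsub p.1 p.2)
  have hδle : ∀ s ∈ Set.Icc (0:ℝ) (2 * π), ∀ t ∈ Set.Icc (0:ℝ) (2 * π),
      δ ≤ ‖γ₁ s - γ₂ t‖ := by
    intro s hs t ht
    exact isMinOn_iff.mp hpmin (s, t) ⟨hs, ht⟩
  -- uniform bound for g on the square
  set C : ℝ := (K₁ : ℝ) * K₂ / δ ^ 2 with hCdef
  have hgC : ∀ s ∈ Set.Icc (0:ℝ) (2 * π), ∀ t ∈ Set.Icc (0:ℝ) (2 * π), g s t ≤ C := by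
    intro s hs t ht
    have h1 := hδle s hs t ht
    apply div_le_div₀ (by positivity) (mul_le_mul (hd1 s) (hd2 t) (norm_nonneg _)
      (NNReal.coe_nonneg _)) (by positivity)
    exact pow_le_pow_left₀ hδ.le h1 2
  -- measurability
  have hm1 : Measurable (deriv γ₁) := measurable_deriv _
  have hm2 : Measurable (deriv γ₂) := measurable_deriv _
  have hgm : Measurable fun q : ℝ × ℝ => g q.1 q.2 := by
    simp only [hg]
    apply Measurable.div
    · exact ((hm1.comp measurable_fst).norm).mul ((hm2.comp measurable_snd).norm)
    · exact (((hc1.comp continuous_fst).sub (hc2.comp continuous_snd)).norm.pow 2).measurable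
  have hgsm : ∀ s, Measurable (g s) := by
    intro s
    simp only [hg]
    exact (measurable_const.mul hm2.norm).div
      (((continuous_const.sub hc2).norm.pow 2).measurable)
  -- inner integrability of g
  have hgint : ∀ s ∈ Set.Icc (0:ℝ) (2 * π), IntervalIntegrable (g s) volume 0 (2 * π) := by
    intro s hs
    rw [intervalIntegrable_iff_integrableOn_Ioc_of_le hT]
    apply Integrable.mono' (integrable_const C) (hgsm s).aestronglyMeasurable.restrict
    refine (ae_restrict_iff' measurableSet_Ioc).2 (ae_of_all _ fun t ht => ?_)
    rw [Real.norm_eq_abs, abs_of_nonneg (hgnn s t)]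
    exact hgC s hs t (Set.Ioc_subset_Icc_self ht)
  -- the function G s = ∫ t, g s t
  have hGnn : ∀ s, 0 ≤ ∫ t in (0:ℝ)..(2 * π), g s t := fun s =>
    intervalIntegral.integral_nonneg hT fun t _ => hgnn s t
  have hGmeas : Measurable fun s => ∫ t in (0:ℝ)..(2 * π), g s t := by
    have heq : (fun s => ∫ t in (0:ℝ)..(2 * π), g s t)
        = fun s => ∫ t, g s t ∂(volume.restrict (Set.Ioc (0:ℝ) (2 * π))) := by
      funext s
      rw [intervalIntegral.integral_of_le hT]
    rw [heq]
    exact (hgm.stronglyMeasurable.integral_prod_right').measurable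
  have hGbound : ∀ s ∈ Set.Icc (0:ℝ) (2 * π),
      ‖∫ t in (0:ℝ)..(2 * π), g s t‖ ≤ C * |2 * π - 0| := by
    intro s hs
    apply intervalIntegral.norm_integral_le_of_norm_le_const
    intro t ht
    rw [Set.uIoc_of_le hT] at ht
    rw [Real.norm_eq_abs, abs_of_nonneg (hgnn s t)]
    exact hgC s hs t (Set.Ioc_subset_Icc_self ht)
  have hGint : IntervalIntegrable (fun s => ∫ t in (0:ℝ)..(2 * π), g s t) volume 0 (2 * π) := by
    rw [intervalIntegrable_iff_integrableOn_Ioc_of_le hT]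
    apply Integrable.mono' (integrable_const (C * |2 * π - 0|))
      hGmeas.aestronglyMeasurable.restrict
    refine (ae_restrict_iff' measurableSet_Ioc).2 (ae_of_all _ fun s hsm => ?_)
    exact hGbound s (Set.Ioc_subset_Icc_self hsm)
  -- inner estimate
  have hinner : ∀ s ∈ Set.Icc (0:ℝ) (2 * π),
      |∫ t in (0:ℝ)..(2 * π), f s t| ≤ ∫ t in (0:ℝ)..(2 * π), g s t := by
    intro s hs
    have h := intervalIntegral.norm_integral_le_of_norm_le
      (f := f s) (μ := volume) (a := 0) (b := 2 * π)
      hT (ae_of_all _ fun t _ => by rw [Real.norm_eq_abs]; exact hfg s t) (hgint s hs)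
    rw [Real.norm_eq_abs] at h
    exact h
  -- outer estimate
  calc |∫ s in (0:ℝ)..(2 * π), ∫ t in (0:ℝ)..(2 * π), f s t|
      ≤ |∫ s in (0:ℝ)..(2 * π), ∫ t in (0:ℝ)..(2 * π), g s t| := by
        rw [← Real.norm_eq_abs (∫ s in (0:ℝ)..(2 * π), ∫ t in (0:ℝ)..(2 * π), f s t)]
        refine (intervalIntegral.norm_integral_le_of_norm_le hT ?_ hGint).trans (le_abs_self _)
        refine (ae_of_all _ fun s hsm => ?_)
        rw [Real.norm_eq_abs]
        exact hinner s (Set.Ioc_subset_Icc_self hsm)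
    _ = ∫ s in (0:ℝ)..(2 * π), ∫ t in (0:ℝ)..(2 * π), g s t :=
        abs_of_nonneg (intervalIntegral.integral_nonneg hT fun s _ => hGnn s)
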